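/- Let (V,ω) be a symplectic vector space. For each p ≥ 2, the map r_p^ω: Λ^p V* ⊗ Λ²V* → Λ^{p+1}V* ⊗ V (defined via contraction and ω^{-1} as above) is sp(V,ω)-equivariant: for every A ∈ sp(V,ω), r_p^ω(A·ξ) = A·r_p^ω(ξ) for all ξ ∈ Λ^p V* ⊗ Λ²V*, where A acts by the natural tensor representation. -/

import Mathlib

variable {V : Type*} [AddCommGroup V] [Module ℝ V]

/-- The wedge product of scalar-valued alternating forms (determinant convention). -/
noncomputable def wedgeForm {p q : ℕ} (a : V [⋀^Fin p]→ₗ[ℝ] ℝ) (b : V [⋀^Fin q]→ₗ[ℝ] ℝ) :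
    V [⋀^Fin (p + q)]→ₗ[ℝ] ℝ :=
  ((TensorProduct.lid ℝ ℝ).toLinearMap.compAlternatingMap (a.domCoprod b)).domDomCongr
    finSumFinEquiv

theorem wedgeForm_add_left {p q : ℕ} (a a' : V [⋀^Fin p]→ₗ[ℝ] ℝ) (c : V [⋀^Fin q]→ₗ[ℝ] ℝ) :
    wedgeForm (a + a') c = wedgeForm a c + wedgeForm a' c := by
  unfold wedgeForm
  rw [show (a + a').domCoprod c = a.domCoprod c + a'.domCoprod c from by
    rw [← AlternatingMap.domCoprod'_apply, ← AlternatingMap.domCoprod'_apply,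
      ← AlternatingMap.domCoprod'_apply, ← map_add, ← TensorProduct.add_tmul]]
  rw [LinearMap.compAlternatingMap_add, AlternatingMap.domDomCongr_add]

theorem wedgeForm_smul_left {p q : ℕ} (r : ℝ) (a : V [⋀^Fin p]→ₗ[ℝ] ℝ)
    (c : V [⋀^Fin q]→ₗ[ℝ] ℝ) : wedgeForm (r • a) c = r • wedgeForm a c := by
  unfold wedgeForm
  rw [show (r • a).domCoprod c = r • a.domCoprod c from by
    rw [← AlternatingMap.domCoprod'_apply, ← AlternatingMap.domCoprod'_apply,
      ← map_smul, TensorProduct.smul_tmul']]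
  rw [LinearMap.compAlternatingMap_smul, AlternatingMap.domDomCongr_smul]

theorem wedgeForm_add_right {p q : ℕ} (a : V [⋀^Fin p]→ₗ[ℝ] ℝ) (c c' : V [⋀^Fin q]→ₗ[ℝ] ℝ) :
    wedgeForm a (c + c') = wedgeForm a c + wedgeForm a c' := by
  unfold wedgeForm
  rw [show a.domCoprod (c + c') = a.domCoprod c + a.domCoprod c' from by
    rw [← AlternatingMap.domCoprod'_apply, ← AlternatingMap.domCoprod'_apply,
      ← AlternatingMap.domCoprod'_apply, ← map_add, ← TensorProduct.tmul_add]]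
  rw [LinearMap.compAlternatingMap_add, AlternatingMap.domDomCongr_add]

theorem wedgeForm_smul_right {p q : ℕ} (r : ℝ) (a : V [⋀^Fin p]→ₗ[ℝ] ℝ)
    (c : V [⋀^Fin q]→ₗ[ℝ] ℝ) : wedgeForm a (r • c) = r • wedgeForm a c := by
  unfold wedgeForm
  rw [show a.domCoprod (r • c) = r • a.domCoprod c from by
    rw [← AlternatingMap.domCoprod'_apply, ← AlternatingMap.domCoprod'_apply,
      ← map_smul, ← TensorProduct.tmul_smul]]
  rw [LinearMap.compAlternatingMap_smul, AlternatingMap.domDomCongr_smul]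

/-- The natural (tensor/derivation) action of `g ∈ gl(V)` on `(k+1)`-forms:
`(g·α)(v₁,…) = −Σᵢ α(v₁,…,g vᵢ,…)`, realized via alternatization. -/
noncomputable def formAct {k : ℕ} (g : V →ₗ[ℝ] V) :
    (V [⋀^Fin (k + 1)]→ₗ[ℝ] ℝ) →ₗ[ℝ] (V [⋀^Fin (k + 1)]→ₗ[ℝ] ℝ) where
  toFun α := -(((Nat.factorial k : ℝ))⁻¹ •
    MultilinearMap.alternatization
      ((MultilinearMap.compLinearMapₗ
          (fun j : Fin (k + 1) => if j = 0 then g else LinearMap.id))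
        α.toMultilinearMap))
  map_add' α β := by
    show -(((Nat.factorial k : ℝ))⁻¹ • MultilinearMap.alternatization
        ((MultilinearMap.compLinearMapₗ (fun j : Fin (k + 1) => if j = 0 then g else LinearMap.id))
          (α.toMultilinearMap + β.toMultilinearMap))) = _
    rw [map_add, map_add, smul_add, neg_add]
  map_smul' c α := by
    have h2 : ∀ m : MultilinearMap ℝ (fun _ : Fin (k + 1) => V) ℝ,
        MultilinearMap.alternatization (c • m) = c • MultilinearMap.alternatization m := by
      intro m
      ext v
      simp [MultilinearMap.alternatization_apply, Finset.mul_sum, mul_smul_comm,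
        MultilinearMap.smul_apply]
    show -(((Nat.factorial k : ℝ))⁻¹ • MultilinearMap.alternatization
        ((MultilinearMap.compLinearMapₗ (fun j : Fin (k + 1) => if j = 0 then g else LinearMap.id))
          (c • α.toMultilinearMap))) = _
    rw [map_smul, h2]
    show -(((Nat.factorial k : ℝ))⁻¹ • c • _) = c • -(((Nat.factorial k : ℝ))⁻¹ • _)
    rw [smul_comm, smul_neg]

/-- `r_p^ω` as a linear map `Λ^{p}V* ⊗ Λ²V* → Λ^{p+1}V* ⊗ V`, for `p = m+2 ≥ 2`:
`r_p^ω(α⊗τ) = (1/(p+1) α∧ι_{eᵢ}τ − (−1)^p/(p(p+1)) ι_{eᵢ}α∧τ) ⊗ ω⁻¹(eⁱ)`. -/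
noncomputable def rOmega [FiniteDimensional ℝ V] (ω : V →ₗ[ℝ] V →ₗ[ℝ] ℝ) {n : ℕ}
    (b : Module.Basis (Fin n) ℝ V) (sharp : (V →ₗ[ℝ] ℝ) → V) (m : ℕ) :
    TensorProduct ℝ (V [⋀^Fin (m + 2)]→ₗ[ℝ] ℝ) (V [⋀^Fin 2]→ₗ[ℝ] ℝ) →ₗ[ℝ]
      TensorProduct ℝ (V [⋀^Fin (m + 3)]→ₗ[ℝ] ℝ) V :=
  TensorProduct.lift
    (LinearMap.mk₂ ℝ
      (fun α τ => ∑ i : Fin n,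
        (((((m : ℝ) + 3)⁻¹ • wedgeForm α (τ.curryLeft (b i)) -
            (((-1 : ℝ) ^ m) / (((m : ℝ) + 2) * ((m : ℝ) + 3))) •
              wedgeForm (α.curryLeft (b i)) τ) :
            V [⋀^Fin (m + 3)]→ₗ[ℝ] ℝ)) ⊗ₜ[ℝ] sharp (b.coord i))
      (by
        intro α α' τ
        rw [← Finset.sum_add_distrib]
        refine Finset.sum_congr rfl fun i _ => ?_
        rw [wedgeForm_add_left, AlternatingMap.curryLeft_add, LinearMap.add_apply,
          wedgeForm_add_left, ← TensorProduct.add_tmul]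
        congr 1
        module)
      (by
        intro c α τ
        rw [Finset.smul_sum]
        refine Finset.sum_congr rfl fun i _ => ?_
        rw [wedgeForm_smul_left, AlternatingMap.curryLeft_smul, LinearMap.smul_apply,
          wedgeForm_smul_left, TensorProduct.smul_tmul']
        congr 1
        module)
      (by
        intro α τ τ'
        rw [← Finset.sum_add_distrib]
        refine Finset.sum_congr rfl fun i _ => ?_
        rw [AlternatingMap.curryLeft_add, LinearMap.add_apply, wedgeForm_add_right,
          wedgeForm_add_right, ← TensorProduct.add_tmul]
        congr 1
        module)
      (by
        intro c α τ
        rw [Finset.smul_sum]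
        refine Finset.sum_congr rfl fun i _ => ?_
        rw [AlternatingMap.curryLeft_smul, LinearMap.smul_apply, wedgeForm_smul_right,
          wedgeForm_smul_right, TensorProduct.smul_tmul']
        congr 1
        module))
section Dev
variable {W : Type*} [AddCommGroup W] [Module ℝ W]

/-- per-slot linear maps: `g` at slot `i`, identity elsewhere. -/
noncomputable def slotMap {ι : Type*} [DecidableEq ι] (g : V →ₗ[ℝ] V) (i : ι) :
    ι → (V →ₗ[ℝ] V) := fun j => if j = i then g else LinearMap.id

/-- `Σᵢ M(v₁,…,g vᵢ,…,vₙ)` as a multilinear map. -/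
noncomputable def smulD {ι : Type*} [DecidableEq ι] [Fintype ι] (g : V →ₗ[ℝ] V)
    (M : MultilinearMap ℝ (fun _ : ι => V) W) : MultilinearMap ℝ (fun _ : ι => V) W :=
  ∑ i, M.compLinearMap (slotMap g i)

theorem smulD_apply {ι : Type*} [DecidableEq ι] [Fintype ι] (g : V →ₗ[ℝ] V)
    (M : MultilinearMap ℝ (fun _ : ι => V) W) (v : ι → V) :
    smulD g M v = ∑ i, M (fun j => if j = i then g (v j) else v j) := by
  rw [smulD, MultilinearMap.sum_apply]
  refine Finset.sum_congr rfl fun i _ => by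
    rw [MultilinearMap.compLinearMap_apply]
    congr 1; funext j; unfold slotMap; split <;> rfl

/-- `Σᵢ α(v₁,…,g vᵢ,…,vₙ)` as an alternating map. -/
noncomputable def contrD {ι : Type*} [DecidableEq ι] [Fintype ι] (g : V →ₗ[ℝ] V)
    (α : V [⋀^ι]→ₗ[ℝ] W) : V [⋀^ι]→ₗ[ℝ] W :=
  { smulD g α.toMultilinearMap with
    map_eq_zero_of_eq' := by
      intro v i j hv hij
      show (smulD g α.toMultilinearMap) v = 0
      rw [smulD_apply g α.toMultilinearMap v]
      simp only [AlternatingMap.coe_multilinearMap]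
      rw [← Finset.sum_subset (Finset.subset_univ ({i, j} : Finset ι))
        (fun k _ hk => ?_)]
      · rw [Finset.sum_pair hij]
        have key : (fun l => if l = i then g (v l) else v l) =
            (fun l => if l = j then g (v l) else v l) ∘ Equiv.swap i j := by
          funext l
          by_cases hl1 : l = i
          · subst hl1
            simp [Equiv.swap_apply_left, hv]
          · by_cases hl2 : l = j
            · subst hl2
              simp [Equiv.swap_apply_right, Ne.symm hij, hij, ← hv]
            · simp [Equiv.swap_apply_of_ne_of_ne hl1 hl2, hl1, hl2]
        rw [key, α.map_swap _ hij, neg_add_cancel]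
      · simp only [Finset.mem_insert, Finset.mem_singleton, not_or] at hk
        refine α.map_eq_zero_of_eq _ ?_ hij
        simp [Ne.symm hk.1, Ne.symm hk.2, hv] }

@[simp] theorem contrD_apply {ι : Type*} [DecidableEq ι] [Fintype ι] (g : V →ₗ[ℝ] V)
    (α : V [⋀^ι]→ₗ[ℝ] W) (v : ι → V) :
    contrD g α v = ∑ i, α (fun j => if j = i then g (v j) else v j) :=
  smulD_apply g α.toMultilinearMap v

theorem contrD_coe {ι : Type*} [DecidableEq ι] [Fintype ι] (g : V →ₗ[ℝ] V)
    (α : V [⋀^ι]→ₗ[ℝ] W) :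
    (contrD g α).toMultilinearMap = smulD g α.toMultilinearMap := rfl

theorem contrD_add {ι : Type*} [DecidableEq ι] [Fintype ι] (g : V →ₗ[ℝ] V)
    (α β : V [⋀^ι]→ₗ[ℝ] W) : contrD g (α + β) = contrD g α + contrD g β := by
  ext v
  simp [contrD_apply, Finset.sum_add_distrib]

theorem contrD_smul {ι : Type*} [DecidableEq ι] [Fintype ι] (g : V →ₗ[ℝ] V)
    (c : ℝ) (α : V [⋀^ι]→ₗ[ℝ] W) : contrD g (c • α) = c • contrD g α := by
  ext v
  simp [contrD_apply, Finset.smul_sum]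

/-- `contrD` as a linear endomorphism. -/
noncomputable def contrL {ι : Type*} [DecidableEq ι] [Fintype ι] (g : V →ₗ[ℝ] V) :
    (V [⋀^ι]→ₗ[ℝ] W) →ₗ[ℝ] (V [⋀^ι]→ₗ[ℝ] W) where
  toFun := contrD g
  map_add' := contrD_add g
  map_smul' := contrD_smul g

@[simp] theorem contrL_apply {ι : Type*} [DecidableEq ι] [Fintype ι] (g : V →ₗ[ℝ] V)
    (α : V [⋀^ι]→ₗ[ℝ] W) : contrL g α = contrD g α := rfl

theorem alternatization_domDomCongr {ι : Type*} [DecidableEq ι] [Fintype ι]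
    (M : MultilinearMap ℝ (fun _ : ι => V) W) (σ : Equiv.Perm ι) :
    MultilinearMap.alternatization (M.domDomCongr σ)
      = Equiv.Perm.sign σ • MultilinearMap.alternatization M := by
  ext v
  rw [MultilinearMap.alternatization_apply, AlternatingMap.smul_apply,
    MultilinearMap.alternatization_apply, Finset.smul_sum]
  refine Fintype.sum_equiv (Equiv.mulRight σ) _ _ fun τ => ?_
  simp only [Equiv.coe_mulRight, MultilinearMap.domDomCongr_apply]
  rcases Int.units_eq_one_or (Equiv.Perm.sign σ) with h | h <;>
    rcases Int.units_eq_one_or (Equiv.Perm.sign τ) with h2 | h2 <;>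
    simp [Equiv.Perm.sign_mul, h, h2, Equiv.Perm.mul_apply]

theorem formAct_eq {k : ℕ} (g : V →ₗ[ℝ] V) (α : V [⋀^Fin (k+1)]→ₗ[ℝ] ℝ) :
    formAct g α = -contrD g α := by
  set M0 := α.toMultilinearMap.compLinearMap (slotMap g (0 : Fin (k+1))) with hM0
  have hslot : ∀ i : Fin (k+1),
      MultilinearMap.alternatization (α.toMultilinearMap.compLinearMap (slotMap g i)) =
      MultilinearMap.alternatization M0 := by
    intro i
    rcases eq_or_ne i 0 with rfl | hi
    · rfl
    · have hM : M0.domDomCongr (Equiv.swap (0 : Fin (k+1)) i)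
          = -(α.toMultilinearMap.compLinearMap (slotMap g i)) := by
        ext v
        simp only [MultilinearMap.domDomCongr_apply, MultilinearMap.compLinearMap_apply,
          MultilinearMap.neg_apply, hM0]
        have harg : (fun j => slotMap g (0 : Fin (k+1)) j (v (Equiv.swap (0 : Fin (k+1)) i j)))
            = (fun j => slotMap g i j (v j)) ∘ Equiv.swap (0 : Fin (k+1)) i := by
          funext j
          simp only [Function.comp_apply, slotMap]
          rcases eq_or_ne j 0 with rfl | hj
          · simp [Equiv.swap_apply_left, hi.symm]
          · rcases eq_or_ne j i with rfl | hj2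
            · simp [Equiv.swap_apply_right, hj, Ne.symm hi]
            · simp [Equiv.swap_apply_of_ne_of_ne hj hj2, hj, hj2]
        rw [harg]
        exact α.map_swap _ (Ne.symm hi)
      have h := congrArg MultilinearMap.alternatization hM
      rw [alternatization_domDomCongr, map_neg, Equiv.Perm.sign_swap (Ne.symm hi)] at h
      refine neg_injective ?_
      rw [← h]
      simp
  have hfact : MultilinearMap.alternatization ((contrD g α).toMultilinearMap)
      = Nat.factorial (k + 1) • contrD g α := by
    rw [show (contrD g α).toMultilinearMap
        = ((contrD g α : V [⋀^Fin (k+1)]→ₗ[ℝ] ℝ) : MultilinearMap ℝ (fun _ : Fin (k+1) => V) ℝ)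
        from rfl, AlternatingMap.coe_alternatization, Fintype.card_fin]
  have hsum : MultilinearMap.alternatization ((contrD g α).toMultilinearMap)
      = (k + 1) • MultilinearMap.alternatization M0 := by
    rw [contrD_coe, smulD, map_sum, Finset.sum_congr rfl (fun i _ => hslot i),
      Finset.sum_const, Finset.card_univ, Fintype.card_fin]
  have hkey : MultilinearMap.alternatization M0 = Nat.factorial k • contrD g α := by
    have h1 : (k + 1) • MultilinearMap.alternatization M0
        = (k + 1) • (Nat.factorial k • contrD g α) := by
      rw [← hsum, hfact, Nat.factorial_succ, mul_smul]
    have h2 : ((k : ℝ) + 1) • MultilinearMap.alternatization M0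
        = ((k : ℝ) + 1) • (Nat.factorial k • contrD g α) := by
      rw [show ((k : ℝ) + 1) = ((k + 1 : ℕ) : ℝ) by push_cast; ring,
        Nat.cast_smul_eq_nsmul, Nat.cast_smul_eq_nsmul]
      exact h1
    exact smul_right_injective _ (by positivity) h2
  show -(((Nat.factorial k : ℝ))⁻¹ •
    MultilinearMap.alternatization
      ((MultilinearMap.compLinearMapₗ
          (fun j : Fin (k + 1) => if j = 0 then g else LinearMap.id))
        α.toMultilinearMap)) = -contrD g α
  rw [show (MultilinearMap.compLinearMapₗ
        (fun j : Fin (k + 1) => if j = 0 then g else LinearMap.id)) α.toMultilinearMap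
      = M0 from rfl]
  rw [hkey, ← Nat.cast_smul_eq_nsmul ℝ, smul_smul,
    inv_mul_cancel₀ (by exact_mod_cast Nat.factorial_ne_zero k), one_smul]

end Dev
section Dev2
variable {W : Type*} [AddCommGroup W] [Module ℝ W]
variable {W' : Type*} [AddCommGroup W'] [Module ℝ W']

theorem contrD_neg {ι : Type*} [DecidableEq ι] [Fintype ι] (g : V →ₗ[ℝ] V)
    (α : V [⋀^ι]→ₗ[ℝ] W) : contrD g (-α) = -contrD g α := by
  have := contrD_add g α (-α)
  simp only [add_neg_cancel] at this
  have h0 : contrD g (0 : V [⋀^ι]→ₗ[ℝ] W) = 0 := by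
    ext v; simp [contrD_apply]
  rw [h0] at this
  linear_combination (norm := abel) -this

theorem contrD_sub {ι : Type*} [DecidableEq ι] [Fintype ι] (g : V →ₗ[ℝ] V)
    (α β : V [⋀^ι]→ₗ[ℝ] W) : contrD g (α - β) = contrD g α - contrD g β := by
  rw [sub_eq_add_neg, contrD_add, contrD_neg, sub_eq_add_neg]

theorem contrD_nsmul {ι : Type*} [DecidableEq ι] [Fintype ι] (g : V →ₗ[ℝ] V)
    (n : ℕ) (α : V [⋀^ι]→ₗ[ℝ] W) : contrD g (n • α) = n • contrD g α := by
  ext v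
  simp [contrD_apply, Finset.smul_sum]

theorem contrD_compAlternatingMap {ι : Type*} [DecidableEq ι] [Fintype ι] (g : V →ₗ[ℝ] V)
    (L : W →ₗ[ℝ] W') (β : V [⋀^ι]→ₗ[ℝ] W) :
    contrD g (L.compAlternatingMap β) = L.compAlternatingMap (contrD g β) := by
  ext v
  simp [contrD_apply, LinearMap.compAlternatingMap_apply, map_sum]

theorem contrD_domDomCongr {ι ι' : Type*} [DecidableEq ι] [Fintype ι]
    [DecidableEq ι'] [Fintype ι'] (g : V →ₗ[ℝ] V) (e : ι ≃ ι') (β : V [⋀^ι]→ₗ[ℝ] W) :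
    contrD g (β.domDomCongr e) = (contrD g β).domDomCongr e := by
  ext v
  show contrD g (β.domDomCongr e) v = contrD g β (fun j => v (e j))
  rw [contrD_apply, contrD_apply]
  refine (Fintype.sum_equiv e _ _ fun i => ?_).symm
  show β (fun j => if j = i then g (v (e j)) else v (e j))
    = β.domDomCongr e (fun j => if j = e i then g (v j) else v j)
  show _ = β (fun j => if e j = e i then g (v (e j)) else v (e j))
  congr 1
  funext j
  simp only [Equiv.apply_eq_iff_eq]

/-- `contrD`/`smulD` commutes with alternatization. -/
theorem contrD_alternatization {ι : Type*} [DecidableEq ι] [Fintype ι] (g : V →ₗ[ℝ] V)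
    (M : MultilinearMap ℝ (fun _ : ι => V) W) :
    contrD g (MultilinearMap.alternatization M)
      = MultilinearMap.alternatization (smulD g M) := by
  ext v
  rw [contrD_apply, MultilinearMap.alternatization_apply]
  have h1 : ∀ i, (MultilinearMap.alternatization M)
        (fun j => if j = i then g (v j) else v j)
      = ∑ σ : Equiv.Perm ι, Equiv.Perm.sign σ •
          M (fun j => if σ j = i then g (v (σ j)) else v (σ j)) := by
    intro i
    rw [MultilinearMap.alternatization_apply]
    rfl
  simp only [h1]
  rw [Finset.sum_comm]
  refine Finset.sum_congr rfl fun σ _ => ?_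
  rw [MultilinearMap.domDomCongr_apply, smulD_apply, ← Finset.smul_sum]
  congr 1
  refine Fintype.sum_equiv σ.symm _ _ fun i => ?_
  congr 1
  funext j
  by_cases h : σ j = i
  · rw [if_pos h, if_pos ((Equiv.eq_symm_apply σ).mpr h)]
  · rw [if_neg h, if_neg fun hc => h ((Equiv.eq_symm_apply σ).mp hc)]

theorem smulD_domCoprod {ιa ιb : Type*} [DecidableEq ιa] [Fintype ιa]
    [DecidableEq ιb] [Fintype ιb] (g : V →ₗ[ℝ] V)
    (a : MultilinearMap ℝ (fun _ : ιa => V) W) (c : MultilinearMap ℝ (fun _ : ιb => V) W') :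
    smulD g (MultilinearMap.domCoprod a c)
      = MultilinearMap.domCoprod (smulD g a) c
        + MultilinearMap.domCoprod a (smulD g c) := by
  ext v
  simp only [smulD_apply, MultilinearMap.domCoprod_apply, MultilinearMap.add_apply]
  rw [Fintype.sum_sum_type]
  congr 1
  · rw [TensorProduct.sum_tmul]
    refine Finset.sum_congr rfl fun i _ => ?_
    congr 1 <;> congr 1 <;> funext j <;> simp
  · rw [TensorProduct.tmul_sum]
    refine Finset.sum_congr rfl fun i _ => ?_
    congr 1 <;> congr 1 <;> funext j <;> simp

theorem contrD_domCoprod {ιa ιb : Type*} [DecidableEq ιa] [Fintype ιa]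
    [DecidableEq ιb] [Fintype ιb] (g : V →ₗ[ℝ] V)
    (a : V [⋀^ιa]→ₗ[ℝ] W) (c : V [⋀^ιb]→ₗ[ℝ] W') :
    contrD g (a.domCoprod c)
      = (contrD g a).domCoprod c + a.domCoprod (contrD g c) := by
  have hfac : MultilinearMap.alternatization
      (MultilinearMap.domCoprod ↑a ↑c :
        MultilinearMap ℝ (fun _ : ιa ⊕ ιb => V) (TensorProduct ℝ W W'))
      = ((Fintype.card ιa).factorial * (Fintype.card ιb).factorial) • a.domCoprod c :=
    MultilinearMap.domCoprod_alternization_eq a c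
  have h1 : ((Fintype.card ιa).factorial * (Fintype.card ιb).factorial) • contrD g (a.domCoprod c)
      = ((Fintype.card ιa).factorial * (Fintype.card ιb).factorial) •
        ((contrD g a).domCoprod c + a.domCoprod (contrD g c)) := by
    rw [← contrD_nsmul, ← hfac, contrD_alternatization, smulD_domCoprod, map_add]
    have ha : (smulD g (↑a : MultilinearMap ℝ (fun _ : ιa => V) W))
        = ↑(contrD g a) := rfl
    have hc : (smulD g (↑c : MultilinearMap ℝ (fun _ : ιb => V) W'))
        = ↑(contrD g c) := rfl
    rw [ha, hc, MultilinearMap.domCoprod_alternization_eq,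
      MultilinearMap.domCoprod_alternization_eq, smul_add]
  have hne : (((Fintype.card ιa).factorial * (Fintype.card ιb).factorial : ℕ) : ℝ) ≠ 0 := by
    exact_mod_cast Nat.mul_ne_zero (Nat.factorial_ne_zero _) (Nat.factorial_ne_zero _)
  rw [← Nat.cast_smul_eq_nsmul ℝ, ← Nat.cast_smul_eq_nsmul ℝ] at h1
  exact smul_right_injective _ hne h1

/-- Leibniz rule for `contrD` over the wedge product. -/
theorem contrD_wedgeForm {p q : ℕ} (g : V →ₗ[ℝ] V)
    (a : V [⋀^Fin p]→ₗ[ℝ] ℝ) (c : V [⋀^Fin q]→ₗ[ℝ] ℝ) :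
    contrD g (wedgeForm a c)
      = wedgeForm (contrD g a) c + wedgeForm a (contrD g c) := by
  unfold wedgeForm
  rw [contrD_domDomCongr, contrD_compAlternatingMap, contrD_domCoprod,
    LinearMap.compAlternatingMap_add, AlternatingMap.domDomCongr_add]

end Dev2
section Dev3

theorem wedgeForm_neg_left {p q : ℕ} (a : V [⋀^Fin p]→ₗ[ℝ] ℝ) (c : V [⋀^Fin q]→ₗ[ℝ] ℝ) :
    wedgeForm (-a) c = -wedgeForm a c := by
  have := wedgeForm_smul_left (-1 : ℝ) a c
  rw [← neg_one_smul ℝ a, wedgeForm_smul_left]; exact neg_one_smul ℝ (wedgeForm a c)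

theorem wedgeForm_neg_right {p q : ℕ} (a : V [⋀^Fin p]→ₗ[ℝ] ℝ) (c : V [⋀^Fin q]→ₗ[ℝ] ℝ) :
    wedgeForm a (-c) = -wedgeForm a c := by
  have := wedgeForm_smul_right (-1 : ℝ) a c
  rw [← neg_one_smul ℝ c, wedgeForm_smul_right]; exact neg_one_smul ℝ (wedgeForm a c)

theorem curryLeft_neg {n : ℕ} (f : V [⋀^Fin (n+1)]→ₗ[ℝ] ℝ) (x : V) :
    (-f).curryLeft x = -(f.curryLeft x) := by
  have := AlternatingMap.curryLeft_smul (-1 : ℝ) f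
  have h := congrFun (congrArg (fun (L : V →ₗ[ℝ] _) => (L : V → _)) this) x
  rw [← neg_one_smul ℝ f, AlternatingMap.curryLeft_smul, LinearMap.smul_apply, neg_one_smul]

/-- Cartan-type commutation: contracting after acting. -/
theorem contrD_curryLeft {n : ℕ} (g : V →ₗ[ℝ] V) (τ : V [⋀^Fin (n+1)]→ₗ[ℝ] ℝ) (x : V) :
    (contrD g τ).curryLeft x = contrD g (τ.curryLeft x) + τ.curryLeft (g x) := by
  ext v
  simp only [AlternatingMap.curryLeft_apply_apply, AlternatingMap.add_apply, contrD_apply]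
  rw [Fin.sum_univ_succ]
  have h0 : (fun j => if j = (0 : Fin (n+1)) then g (Matrix.vecCons x v j)
      else Matrix.vecCons x v j) = Matrix.vecCons (g x) v := by
    funext j
    refine Fin.cases ?_ (fun l => ?_) j
    · simp
    · simp [Fin.succ_ne_zero]
  have hsucc : ∀ t : Fin n, (fun j => if j = Fin.succ t then g (Matrix.vecCons x v j)
      else Matrix.vecCons x v j) = Matrix.vecCons x (fun l => if l = t then g (v l) else v l) := by
    intro t
    funext j
    refine Fin.cases ?_ (fun l => ?_) j
    · simp [(Fin.succ_ne_zero t).symm]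
    · by_cases hl : l = t
      · subst hl; simp
      · simp [hl, fun h => hl (Fin.succ_injective _ h)]
  rw [h0]
  rw [Finset.sum_congr rfl fun t _ => congrArg τ (hsucc t)]
  rw [add_comm]

/-- The key symplectic identity: `Σᵢ ⟨eʲ, A eᵢ⟩ ♯eⁱ + A ♯eʲ = 0`. -/
theorem sharp_key [FiniteDimensional ℝ V] (ω : V →ₗ[ℝ] V →ₗ[ℝ] ℝ)
    (hnondeg : ∀ x : V, (∀ y : V, ω x y = 0) → x = 0)
    {n : ℕ} (b : Module.Basis (Fin n) ℝ V)
    (sharp : (V →ₗ[ℝ] ℝ) → V) (hsharp : ∀ (f : V →ₗ[ℝ] ℝ) (x : V), ω (sharp f) x = f x)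
    (A : Module.End ℝ V) (hA : ∀ x y : V, ω (A x) y + ω x (A y) = 0) (j : Fin n) :
    (∑ i, (b.coord j (A (b i))) • sharp (b.coord i)) + A (sharp (b.coord j)) = 0 := by
  apply hnondeg
  intro y
  rw [map_add, LinearMap.add_apply, map_sum, LinearMap.sum_apply]
  have h1 : ∀ i, (ω ((b.coord j (A (b i))) • sharp (b.coord i))) y
      = (b.coord j (A (b i))) * (b.coord i y) := by
    intro i
    rw [map_smul, LinearMap.smul_apply, smul_eq_mul, hsharp]
  have h2 : (ω (A (sharp (b.coord j)))) y = -(b.coord j (A y)) := by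
    have := hA (sharp (b.coord j)) y
    have h3 : ω (A (sharp (b.coord j))) y = -(ω (sharp (b.coord j)) (A y)) := by
      linarith [this]
    rw [h3, hsharp]
  rw [h2, Finset.sum_congr rfl fun i _ => h1 i]
  have h4 : b.coord j (A y) = ∑ i, (b.coord j (A (b i))) * (b.coord i y) := by
    conv_lhs => rw [← Module.Basis.sum_repr b y]
    rw [map_sum, map_sum]
    refine Finset.sum_congr rfl fun i _ => ?_
    rw [map_smul, map_smul, smul_eq_mul, mul_comm]
    simp [Module.Basis.coord_apply]
  rw [← h4]
  ring

end Dev3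
section Dev4

theorem wedgeForm_sub_left {p q : ℕ} (a a' : V [⋀^Fin p]→ₗ[ℝ] ℝ) (c : V [⋀^Fin q]→ₗ[ℝ] ℝ) :
    wedgeForm (a - a') c = wedgeForm a c - wedgeForm a' c := by
  rw [sub_eq_add_neg, wedgeForm_add_left, wedgeForm_neg_left, sub_eq_add_neg]

theorem wedgeForm_sub_right {p q : ℕ} (a : V [⋀^Fin p]→ₗ[ℝ] ℝ) (c c' : V [⋀^Fin q]→ₗ[ℝ] ℝ) :
    wedgeForm a (c - c') = wedgeForm a c - wedgeForm a c' := by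
  rw [sub_eq_add_neg, wedgeForm_add_right, wedgeForm_neg_right, sub_eq_add_neg]

theorem key_identity (m : ℕ) (A : Module.End ℝ V) (α : V [⋀^Fin (m+2)]→ₗ[ℝ] ℝ)
    (τ : V [⋀^Fin 2]→ₗ[ℝ] ℝ) (x : V) :
    formAct (k := m+2) A (((m:ℝ)+3)⁻¹ • wedgeForm α (τ.curryLeft x)
        - (((-1:ℝ)^m)/(((m:ℝ)+2)*((m:ℝ)+3))) • wedgeForm (α.curryLeft x) τ)
    = (((m:ℝ)+3)⁻¹ • wedgeForm (formAct (k := m+1) A α) (τ.curryLeft x)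
        - (((-1:ℝ)^m)/(((m:ℝ)+2)*((m:ℝ)+3))) •
            wedgeForm ((formAct (k := m+1) A α).curryLeft x) τ)
      + (((m:ℝ)+3)⁻¹ • wedgeForm α ((formAct (k := 1) A τ).curryLeft x)
        - (((-1:ℝ)^m)/(((m:ℝ)+2)*((m:ℝ)+3))) •
            wedgeForm (α.curryLeft x) (formAct (k := 1) A τ))
      + (((m:ℝ)+3)⁻¹ • wedgeForm α (τ.curryLeft (A x))
        - (((-1:ℝ)^m)/(((m:ℝ)+2)*((m:ℝ)+3))) • wedgeForm (α.curryLeft (A x)) τ) := by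
  rw [formAct_eq (k := m+2), formAct_eq (k := m+1), formAct_eq (k := 1)]
  have hτ : contrD (A : V →ₗ[ℝ] V) (τ.curryLeft x)
      = (contrD A τ).curryLeft x - τ.curryLeft (A x) := by
    rw [contrD_curryLeft]; abel
  have hα : contrD (A : V →ₗ[ℝ] V) (α.curryLeft x)
      = (contrD A α).curryLeft x - α.curryLeft (A x) := by
    rw [contrD_curryLeft]; abel
  rw [contrD_sub, contrD_smul, contrD_smul, contrD_wedgeForm, contrD_wedgeForm]
  simp only [hτ, hα, curryLeft_neg, wedgeForm_neg_left, wedgeForm_neg_right,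
    wedgeForm_sub_left, wedgeForm_sub_right]
  module

end Dev4
section Dev5

/-- The integrand of `rOmega`, as a linear function of the contraction direction. -/
noncomputable def phiMap (m : ℕ) (α : V [⋀^Fin (m+2)]→ₗ[ℝ] ℝ) (τ : V [⋀^Fin 2]→ₗ[ℝ] ℝ) :
    V →ₗ[ℝ] (V [⋀^Fin (m+3)]→ₗ[ℝ] ℝ) where
  toFun x := ((m:ℝ)+3)⁻¹ • wedgeForm α (τ.curryLeft x)
      - (((-1:ℝ)^m)/(((m:ℝ)+2)*((m:ℝ)+3))) • wedgeForm (α.curryLeft x) τ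
  map_add' x y := by
    rw [map_add τ.curryLeft, map_add α.curryLeft, wedgeForm_add_right, wedgeForm_add_left,
      smul_add, smul_add]
    abel
  map_smul' c x := by
    rw [map_smul τ.curryLeft, map_smul α.curryLeft, wedgeForm_smul_right, wedgeForm_smul_left,
      RingHom.id_apply, smul_sub, smul_comm c, smul_comm c]

theorem phiMap_apply (m : ℕ) (α : V [⋀^Fin (m+2)]→ₗ[ℝ] ℝ) (τ : V [⋀^Fin 2]→ₗ[ℝ] ℝ) (x : V) :
    phiMap m α τ x = ((m:ℝ)+3)⁻¹ • wedgeForm α (τ.curryLeft x)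
      - (((-1:ℝ)^m)/(((m:ℝ)+2)*((m:ℝ)+3))) • wedgeForm (α.curryLeft x) τ := rfl

theorem rOmega_tmul [FiniteDimensional ℝ V] (ω : V →ₗ[ℝ] V →ₗ[ℝ] ℝ) {n : ℕ}
    (b : Module.Basis (Fin n) ℝ V) (sharp : (V →ₗ[ℝ] ℝ) → V) (m : ℕ)
    (α : V [⋀^Fin (m+2)]→ₗ[ℝ] ℝ) (τ : V [⋀^Fin 2]→ₗ[ℝ] ℝ) :
    rOmega ω b sharp m (α ⊗ₜ[ℝ] τ)
      = ∑ i, phiMap m α τ (b i) ⊗ₜ[ℝ] sharp (b.coord i) := by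
  rw [rOmega, TensorProduct.lift.tmul]
  rfl

theorem key_identity' (m : ℕ) (A : Module.End ℝ V) (α : V [⋀^Fin (m+2)]→ₗ[ℝ] ℝ)
    (τ : V [⋀^Fin 2]→ₗ[ℝ] ℝ) (x : V) :
    formAct (k := m+2) A (phiMap m α τ x)
      = phiMap m (formAct (k := m+1) A α) τ x + phiMap m α (formAct (k := 1) A τ) x
        + phiMap m α τ (A x) :=
  key_identity m A α τ x

end Dev5

/-- for every `A ∈ sp(V,ω)`, the map `r_p^ω` (for `p = m+2 ≥ 2`) is
`sp(V,ω)`-equivariant: `r_p^ω(A·ξ) = A·(r_p^ω ξ)` for all `ξ ∈ Λ^p V* ⊗ Λ²V*`,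
where `A` acts on forms by the natural (co)tensor representation and on `V` by `A`. -/
theorem rOmega_equivariant
    [FiniteDimensional ℝ V]
    (ω : V →ₗ[ℝ] V →ₗ[ℝ] ℝ)
    (hskew : ∀ x y : V, ω x y = -ω y x)
    (hnondeg : ∀ x : V, (∀ y : V, ω x y = 0) → x = 0)
    {n : ℕ} (b : Module.Basis (Fin n) ℝ V)
    (sharp : (V →ₗ[ℝ] ℝ) → V) (hsharp : ∀ (f : V →ₗ[ℝ] ℝ) (x : V), ω (sharp f) x = f x)
    (m : ℕ) (A : Module.End ℝ V) (hA : ∀ x y : V, ω (A x) y + ω x (A y) = 0)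
    (ξ : TensorProduct ℝ (V [⋀^Fin (m + 2)]→ₗ[ℝ] ℝ) (V [⋀^Fin 2]→ₗ[ℝ] ℝ)) :
    rOmega ω b sharp m
        ((LinearMap.rTensor (V [⋀^Fin 2]→ₗ[ℝ] ℝ) (formAct (k := m + 1) A) +
          LinearMap.lTensor (V [⋀^Fin (m + 2)]→ₗ[ℝ] ℝ) (formAct (k := 1) A)) ξ)
      = (LinearMap.rTensor V (formAct (k := m + 2) A) +
          LinearMap.lTensor (V [⋀^Fin (m + 3)]→ₗ[ℝ] ℝ) A)
          (rOmega ω b sharp m ξ) := by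
  induction ξ using TensorProduct.induction_on with
  | zero => simp
  | add x y hx hy => simp only [map_add, hx, hy]
  | tmul α τ =>
    simp only [LinearMap.add_apply, LinearMap.rTensor_tmul, LinearMap.lTensor_tmul, map_add]
    rw [rOmega_tmul, rOmega_tmul, rOmega_tmul]
    rw [map_sum (LinearMap.rTensor V (formAct (k := m + 2) A)),
      map_sum (LinearMap.lTensor (V [⋀^Fin (m + 3)]→ₗ[ℝ] ℝ) A)]
    simp only [LinearMap.rTensor_tmul, LinearMap.lTensor_tmul]
    have hkey : ∀ i, (formAct (k := m+2) A) (phiMap m α τ (b i)) ⊗ₜ[ℝ] sharp (b.coord i)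
        = phiMap m (formAct (k := m+1) A α) τ (b i) ⊗ₜ[ℝ] sharp (b.coord i)
          + phiMap m α (formAct (k := 1) A τ) (b i) ⊗ₜ[ℝ] sharp (b.coord i)
          + phiMap m α τ (A (b i)) ⊗ₜ[ℝ] sharp (b.coord i) := by
      intro i
      rw [key_identity', TensorProduct.add_tmul, TensorProduct.add_tmul]
    rw [Finset.sum_congr rfl fun i _ => hkey i]
    rw [Finset.sum_add_distrib, Finset.sum_add_distrib]
    have hzero : (∑ i, phiMap m α τ (A (b i)) ⊗ₜ[ℝ] sharp (b.coord i))
        + ∑ i, phiMap m α τ (b i) ⊗ₜ[ℝ] (A (sharp (b.coord i))) = 0 := by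
      have hexp : ∀ i, phiMap m α τ (A (b i)) ⊗ₜ[ℝ] sharp (b.coord i)
          = ∑ j, phiMap m α τ (b j) ⊗ₜ[ℝ] ((b.coord j (A (b i))) • sharp (b.coord i)) := by
        intro i
        conv_lhs => rw [← Module.Basis.sum_repr b (A (b i))]
        rw [map_sum, TensorProduct.sum_tmul]
        refine Finset.sum_congr rfl fun j _ => ?_
        rw [map_smul, TensorProduct.smul_tmul]
        rw [Module.Basis.coord_apply]
      rw [Finset.sum_congr rfl fun i _ => hexp i, Finset.sum_comm, ← Finset.sum_add_distrib]
      refine Finset.sum_eq_zero fun j _ => ?_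
      rw [← TensorProduct.tmul_sum, ← TensorProduct.tmul_add,
        sharp_key ω hnondeg b sharp hsharp A hA j, TensorProduct.tmul_zero]
    rw [add_assoc (_ + _) _ _, hzero, add_zero]
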